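/- Let φ_β be the regularized positive part. Then for every β > 0 and every s ∈ ℝ one has the two-sided estimate φ_β(s) ≤ s · φ_β'(s) ≤ 4 · φ_β(s). -/

import Mathlib

/-- The regularized positive part `φ_β`: `φ_β(s) = (s⁴ + β⁴)^(1/4) − β` for `s > 0`
and `φ_β(s) = 0` for `s ≤ 0`. -/
noncomputable def phiB (β : ℝ) (s : ℝ) : ℝ :=
  if 0 < s then (s ^ 4 + β ^ 4) ^ ((1 : ℝ) / 4) - β else 0

lemma phiB_deriv_pos (β : ℝ) (hβ : 0 < β) (s : ℝ) (hs : 0 < s) :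
    deriv (phiB β) s = s ^ 3 * (s ^ 4 + β ^ 4) ^ ((1 : ℝ) / 4 - 1) := by
  have hbase : 0 < s ^ 4 + β ^ 4 := by positivity
  have h1 : HasDerivAt (fun x : ℝ => x ^ 4 + β ^ 4) (4 * s ^ 3) s := by
    simpa using ((hasDerivAt_pow 4 s).add_const (β ^ 4))
  have h2 : HasDerivAt (fun x : ℝ => (x ^ 4 + β ^ 4) ^ ((1 : ℝ) / 4) - β)
      (s ^ 3 * (s ^ 4 + β ^ 4) ^ ((1 : ℝ) / 4 - 1)) s := by
    have := (h1.rpow_const (p := (1 : ℝ) / 4) (Or.inl hbase.ne'))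
    have h := this.sub_const β
    refine h.congr_deriv ?_
    ring
  have heq : phiB β =ᶠ[nhds s] fun x => (x ^ 4 + β ^ 4) ^ ((1 : ℝ) / 4) - β := by
    filter_upwards [eventually_gt_nhds hs] with x hx
    simp [phiB, hx]
  rw [Filter.EventuallyEq.deriv_eq heq, h2.deriv]

/-- For every `β > 0` and every `s ∈ ℝ`, `φ_β(s) ≤ s · φ_β'(s) ≤ 4 · φ_β(s)`. -/
theorem phiB_le_mul_deriv_le (β : ℝ) (hβ : 0 < β) (s : ℝ) :
    phiB β s ≤ s * deriv (phiB β) s ∧ s * deriv (phiB β) s ≤ 4 * phiB β s := by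
  rcases lt_trichotomy s 0 with hs | hs | hs
  · have heq : phiB β =ᶠ[nhds s] fun _ => (0 : ℝ) := by
      filter_upwards [eventually_lt_nhds hs] with x hx
      simp [phiB, not_lt.2 hx.le]
    have hd : deriv (phiB β) s = 0 := by
      rw [Filter.EventuallyEq.deriv_eq heq, deriv_const]
    have hv : phiB β s = 0 := by simp [phiB, not_lt.2 hs.le]
    simp [hd, hv]
  · subst hs
    have hv : phiB β 0 = 0 := by simp [phiB]
    simp [hv]
  · have hbase : 0 < s ^ 4 + β ^ 4 := by positivity
    rw [phiB_deriv_pos β hβ s hs]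
    have hv : phiB β s = (s ^ 4 + β ^ 4) ^ ((1 : ℝ) / 4) - β := by simp [phiB, hs]
    rw [hv]
    set A : ℝ := (s ^ 4 + β ^ 4) ^ ((1 : ℝ) / 4) with hA
    set B : ℝ := (s ^ 4 + β ^ 4) ^ ((1 : ℝ) / 4 - 1) with hB
    have hApos : 0 < A := Real.rpow_pos_of_pos hbase _
    have hBpos : 0 < B := Real.rpow_pos_of_pos hbase _
    have hA4 : A ^ 4 = s ^ 4 + β ^ 4 := by
      rw [hA, ← Real.rpow_natCast (_ ^ ((1:ℝ)/4)) 4, ← Real.rpow_mul hbase.le]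
      norm_num
    have hA3 : A ^ 3 = (s ^ 4 + β ^ 4) ^ ((3 : ℝ) / 4) := by
      rw [hA, ← Real.rpow_natCast (_ ^ ((1:ℝ)/4)) 3, ← Real.rpow_mul hbase.le]
      norm_num
    have hAB : A ^ 3 * B = 1 := by
      rw [hA3, hB, ← Real.rpow_add hbase]
      norm_num
    have hβA : β ≤ A := by
      have : (β ^ 4 : ℝ) ^ ((1 : ℝ) / 4) ≤ (s ^ 4 + β ^ 4) ^ ((1 : ℝ) / 4) := by
        apply Real.rpow_le_rpow (by positivity) (le_add_of_nonneg_left (by positivity)) (by norm_num)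
      calc β = (β ^ 4 : ℝ) ^ ((1 : ℝ) / 4) := by
              rw [← Real.rpow_natCast β 4, ← Real.rpow_mul hβ.le]
              norm_num
        _ ≤ A := this
    have hamgm : β * A ^ 3 ≤ (1 / 4) * β ^ 4 + (3 / 4) * (s ^ 4 + β ^ 4) := by
      have := Real.geom_mean_le_arith_mean2_weighted (by norm_num : (0:ℝ) ≤ 1/4)
        (by norm_num : (0:ℝ) ≤ 3/4) (by positivity : (0:ℝ) ≤ β ^ 4)
        (by positivity : (0:ℝ) ≤ s ^ 4 + β ^ 4) (by norm_num)
      calc β * A ^ 3 = (β ^ 4 : ℝ) ^ ((1 : ℝ) / 4) * (s ^ 4 + β ^ 4) ^ ((3 : ℝ) / 4) := by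
            rw [hA3]
            congr 1
            rw [← Real.rpow_natCast β 4, ← Real.rpow_mul hβ.le]
            norm_num
        _ ≤ 1 / 4 * β ^ 4 + 3 / 4 * (s ^ 4 + β ^ 4) := this
    constructor
    · -- (A - β) ≤ s * (s^3 * B) = s^4 * B; multiply by A^3
      have key : (A - β) * A ^ 3 ≤ s ^ 4 := by nlinarith [hA4, mul_le_mul_of_nonneg_left (pow_le_pow_left₀ hβ.le hβA 3) hβ.le]
      nlinarith [mul_le_mul_of_nonneg_right key hBpos.le, hAB, hApos, hBpos]
    · have key : s ^ 4 ≤ (4 * (A - β)) * A ^ 3 := by nlinarith [hA4, hamgm]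
      nlinarith [mul_le_mul_of_nonneg_right key hBpos.le, hAB, hApos, hBpos]
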